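/- If D is an integrable distribution whose orthogonal complement D⊥ is locally spanned by Killing vector fields of g, then D is totally geodesic (the symmetric part of its second fundamental form vanishes). -/
import Mathlib


/-- Abstract algebraic model of the `C^∞(M)`-module of vector fields on a
Riemannian manifold `(M,g)`: metric `g`, Lie bracket, Levi-Civita connection
`nabla` and the action `act X f = X(f)` of vector fields on functions. -/
structure RiemGeom (C V : Type*) [CommRing C] [AddCommGroup V] [Module C V] where
  g : V →ₗ[C] V →ₗ[C] C
  g_symm : ∀ X Y, g X Y = g Y X
  g_nondeg : ∀ X, (∀ Y, g X Y = 0) → X = 0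
  bracket : V → V → V
  nabla : V → V → V
  act : V → C → C
  act_add : ∀ X f₁ f₂, act X (f₁ + f₂) = act X f₁ + act X f₂
  act_mul : ∀ X f₁ f₂, act X (f₁ * f₂) = f₁ * act X f₂ + f₂ * act X f₁
  act_add_left : ∀ X Y f, act (X + Y) f = act X f + act Y f
  act_smul_left : ∀ (f h : C) X, act (f • X) h = f * act X h
  nabla_add_left : ∀ X X' Y, nabla (X + X') Y = nabla X Y + nabla X' Y
  nabla_smul_left : ∀ (f : C) X Y, nabla (f • X) Y = f • nabla X Y
  nabla_add_right : ∀ X Y Y', nabla X (Y + Y') = nabla X Y + nabla X Y'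
  nabla_leibniz : ∀ X (f : C) Y, nabla X (f • Y) = act X f • Y + f • nabla X Y
  torsion_free : ∀ X Y, nabla X Y - nabla Y X = bracket X Y
  metric_compat : ∀ X Y Z, act X (g Y Z) = g (nabla X Y) Z + g Y (nabla X Z)

/-- A regular distribution `D` in a Riemannian manifold, together with its
orthogonal complement `Dperp` and the orthogonal projection `piD` onto `D`. -/
structure RiemDist {C V : Type*} [CommRing C] [AddCommGroup V] [Module C V]
    (G : RiemGeom C V) where
  D : Submodule C V
  Dperp : Submodule C V
  piD : V →ₗ[C] V
  piD_mem : ∀ v, piD v ∈ D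
  piD_id : ∀ v ∈ D, piD v = v
  perp_mem : ∀ v, v - piD v ∈ Dperp
  piD_perp : ∀ w ∈ Dperp, piD w = 0
  orth : ∀ v ∈ D, ∀ w ∈ Dperp, G.g v w = 0

variable {C V : Type*} [CommRing C] [AddCommGroup V] [Module C V]

/-- The intrinsic connection `∇^D_X Y = π^D (∇_X Y)`. -/
def nablaD (G : RiemGeom C V) (P : RiemDist G) (X Y : V) : V := P.piD (G.nabla X Y)

/-- The second fundamental form `B(X,Y) = ∇_X Y - ∇^D_X Y = π^{D⊥}(∇_X Y)`. -/
def sff (G : RiemGeom C V) (P : RiemDist G) (X Y : V) : V :=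
  G.nabla X Y - P.piD (G.nabla X Y)

/-- The Lie derivative of the metric: `(L_Z g)(X,Y)`. -/
def lieMetric (G : RiemGeom C V) (Z X Y : V) : C :=
  G.act Z (G.g X Y) - G.g (G.bracket Z X) Y - G.g X (G.bracket Z Y)

/-- The exterior derivative of the one-form `i_Z g`: `(d (i_Z g))(X,Y)`. -/
def dIZg (G : RiemGeom C V) (Z X Y : V) : C :=
  G.act X (G.g Z Y) - G.act Y (G.g Z X) - G.g Z (G.bracket X Y)

/-- The curvature endomorphism `R(X,Y)Z` of the Levi-Civita connection. -/
def curvR (G : RiemGeom C V) (X Y Z : V) : V :=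
  G.nabla X (G.nabla Y Z) - G.nabla Y (G.nabla X Z) - G.nabla (G.bracket X Y) Z

/-- The curvature endomorphism `R^D(X,Y)Z` of the intrinsic connection, taken
with respect to the projected bracket `[X,Y]^D = π^D [X,Y]`. -/
def curvRD (G : RiemGeom C V) (P : RiemDist G) (X Y Z : V) : V :=
  nablaD G P X (nablaD G P Y Z) - nablaD G P Y (nablaD G P X Z) -
    nablaD G P (P.piD (G.bracket X Y)) Z

/-- if `D` is integrable and every section of `D⊥` is a Killing
vector field of `g`, then `D` is totally geodesic: the symmetric part of its
second fundamental form vanishes. -/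
theorem integrable_killing_orth_totally_geodesic
    {C V : Type*} [CommRing C] [AddCommGroup V] [Module C V]
    (G : RiemGeom C V) (P : RiemDist G)
    (hinv : ∀ X ∈ P.D, ∀ Y ∈ P.D, G.bracket X Y ∈ P.D)
    (hKilling : ∀ Z ∈ P.Dperp, ∀ X Y : V, lieMetric G Z X Y = 0) :
    ∀ X ∈ P.D, ∀ Y ∈ P.D, sff G P X Y + sff G P Y X = 0 := by
  intro X hX Y hY
  have act_zero : ∀ W : V, G.act W 0 = 0 := by
    intro W
    have := G.act_add W 0 0
    simpa using this
  -- the symmetric second fundamental form lies in Dperp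
  have hW : sff G P X Y + sff G P Y X ∈ P.Dperp :=
    Submodule.add_mem _ (P.perp_mem _) (P.perp_mem _)
  -- key: g (sff X Y + sff Y X) Z = 0 for all Z ∈ Dperp
  have key : ∀ Z ∈ P.Dperp, G.g (sff G P X Y + sff G P Y X) Z = 0 := by
    intro Z hZ
    have hYZ : G.g Y Z = 0 := P.orth Y hY Z hZ
    have hXZ : G.g X Z = 0 := P.orth X hX Z hZ
    -- metric compatibility in direction X and Y
    have c1 : G.g (G.nabla X Y) Z + G.g Y (G.nabla X Z) = 0 := by
      have := G.metric_compat X Y Z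
      rw [hYZ, act_zero] at this
      linear_combination -this
    have c2 : G.g (G.nabla Y X) Z + G.g X (G.nabla Y Z) = 0 := by
      have := G.metric_compat Y X Z
      rw [hXZ, act_zero] at this
      linear_combination -this
    -- Killing equation for Z
    have hK := hKilling Z hZ X Y
    unfold lieMetric at hK
    have hbZX : G.bracket Z X = G.nabla Z X - G.nabla X Z := (G.torsion_free Z X).symm
    have hbZY : G.bracket Z Y = G.nabla Z Y - G.nabla Y Z := (G.torsion_free Z Y).symm
    have hcomp := G.metric_compat Z X Y
    rw [hbZX, hbZY, hcomp] at hK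
    simp only [map_sub, LinearMap.sub_apply] at hK
    -- hK : g(∇ZX,Y)+g(X,∇ZY) - (g(∇ZX,Y) - g(∇XZ,Y)) - (g(X,∇ZY) - g(X,∇YZ)) = 0
    have killing : G.g (G.nabla X Z) Y + G.g X (G.nabla Y Z) = 0 := by
      linear_combination hK
    -- projections are orthogonal to Z
    have p1 : G.g (P.piD (G.nabla X Y)) Z = 0 :=
      P.orth _ (P.piD_mem _) Z hZ
    have p2 : G.g (P.piD (G.nabla Y X)) Z = 0 :=
      P.orth _ (P.piD_mem _) Z hZ
    unfold sff
    simp only [map_sub, map_add, LinearMap.sub_apply, LinearMap.add_apply, p1, p2]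
    have hs : G.g Y (G.nabla X Z) = G.g (G.nabla X Z) Y := G.g_symm _ _
    linear_combination c1 + c2 - killing - hs
  apply G.g_nondeg
  intro v
  have hv : G.g (sff G P X Y + sff G P Y X) v
      = G.g (sff G P X Y + sff G P Y X) (P.piD v)
        + G.g (sff G P X Y + sff G P Y X) (v - P.piD v) := by
    rw [← map_add]
    congr 1
    abel
  rw [hv, key _ (P.perp_mem v)]
  have : G.g (P.piD v) (sff G P X Y + sff G P Y X) = 0 :=
    P.orth _ (P.piD_mem v) _ hW
  rw [G.g_symm] at this
  rw [this]
  ring
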